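/- Let q ≠ 0 and let γ : ℝ → E be a three-times differentiable unit-speed magnetic curve with charge q (γ''(t) = -q·φ(γ'(t)), ‖γ'(t)‖ = 1), with constant slant values cos θ_α = γ'_{2n+α} satisfying 0 < Σ_{α=1}^{s} cos²θ_α < 1. Set κ₁ = |q|·√(1 - Σ_α cos²θ_α). Then the second curvature of γ is the constant κ₂ = ‖γ'''(t)/κ₁ + κ₁·γ'(t)‖ = |q|·√(Σ_{α=1}^{s} cos²θ_α) for all t ∈ ℝ. -/

import Mathlib

open scoped RealInnerProductSpace

/-- The structure tensor `φ` of the standard `C`-manifold structure on `ℝ^{2n+s}`: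
`(φv)_i = v_{n+i}`, `(φv)_{n+i} = -v_i` for `0 ≤ i < n`, and `(φv)_{2n+α} = 0`. -/
noncomputable def phi (n s : ℕ) (v : EuclideanSpace ℝ (Fin (2*n+s))) :
    EuclideanSpace ℝ (Fin (2*n+s)) := WithLp.toLp 2 fun k =>
  if _h1 : (k : ℕ) < n then v ⟨n + (k : ℕ), by omega⟩
  else if _h2 : (k : ℕ) < 2*n then -v ⟨(k : ℕ) - n, by omega⟩
  else 0

/-- The index `2n+α` of the characteristic direction `ξ_α = e_{2n+α}`. -/
def idxA (n s : ℕ) (α : Fin s) : Fin (2*n+s) := ⟨2*n + (α : ℕ), by omega⟩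

/-- The index `i` for `1 ≤ i ≤ n` (0-based). -/
def idxI (n s : ℕ) (i : Fin n) : Fin (2*n+s) := ⟨(i : ℕ), by omega⟩

/-- The index `n+i` for `1 ≤ i ≤ n` (0-based). -/
def idxNI (n s : ℕ) (i : Fin n) : Fin (2*n+s) := ⟨n + (i : ℕ), by omega⟩

/-- `phi` as a continuous linear map. -/
noncomputable def phiCLM (n s : ℕ) :
    EuclideanSpace ℝ (Fin (2*n+s)) →L[ℝ] EuclideanSpace ℝ (Fin (2*n+s)) :=
  LinearMap.toContinuousLinearMap
  { toFun := phi n s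
    map_add' := by
      intro v w
      ext k
      simp only [phi, PiLp.add_apply, PiLp.toLp_apply]
      split_ifs <;> simp <;> ring
    map_smul' := by
      intro c v
      ext k
      simp only [phi, PiLp.smul_apply, smul_eq_mul, RingHom.id_apply, PiLp.toLp_apply]
      split_ifs <;> simp }

lemma phiCLM_apply (n s : ℕ) (v : EuclideanSpace ℝ (Fin (2*n+s))) :
    phiCLM n s v = phi n s v := rfl

lemma phi_sq_lt (n s : ℕ) (v : EuclideanSpace ℝ (Fin (2*n+s))) (k : Fin (2*n+s))
    (hk : (k : ℕ) < 2*n) : phi n s (phi n s v) k = -v k := by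
  rcases lt_or_ge (k : ℕ) n with h | h
  · simp only [phi, PiLp.toLp_apply]
    rw [dif_pos h, dif_neg (by omega), dif_pos (by omega)]
    exact congrArg (fun j => -v j) (Fin.ext (by simp))
  · simp only [phi, PiLp.toLp_apply]
    rw [dif_neg (by omega), dif_pos hk, dif_pos (by omega)]
    refine congrArg (fun j => -v j) (Fin.ext ?_)
    simp
    omega

lemma phi_sq_ge (n s : ℕ) (v : EuclideanSpace ℝ (Fin (2*n+s))) (k : Fin (2*n+s))
    (hk : 2*n ≤ (k : ℕ)) : phi n s (phi n s v) k = 0 := by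
  simp only [phi, PiLp.toLp_apply]
  rw [dif_neg (by omega), dif_neg (by omega)]

/-- Second curvature of a non-geodesic, non-Legendre normal magnetic curve in the standard
`C`-manifold `ℝ^{2n+s}`: `κ₂ = ‖γ'''/κ₁ + κ₁·γ'‖ = |q|·√(Σ_α cos²θ_α)`. -/
theorem normal_magnetic_curve_second_curvature
    (n s : ℕ) (hn : 0 < n) (hs : 0 < s) (q : ℝ) (hq : q ≠ 0)
    (γ : ℝ → EuclideanSpace ℝ (Fin (2*n+s)))
    (hγ : Differentiable ℝ γ) (hγ' : Differentiable ℝ (deriv γ))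
    (hγ'' : Differentiable ℝ (deriv (deriv γ)))
    (hmag : ∀ t : ℝ, deriv (deriv γ) t = (-q) • phi n s (deriv γ t))
    (hunit : ∀ t : ℝ, ‖deriv γ t‖ = 1)
    (θ : Fin s → ℝ)
    (hslant : ∀ t : ℝ, ∀ α : Fin s, deriv γ t (idxA n s α) = Real.cos (θ α))
    (hC0 : 0 < ∑ α : Fin s, Real.cos (θ α) ^ 2)
    (hC1 : ∑ α : Fin s, Real.cos (θ α) ^ 2 < 1)
    (κ₁ : ℝ)
    (hκ₁ : κ₁ = |q| * Real.sqrt (1 - ∑ α : Fin s, Real.cos (θ α) ^ 2)) :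
    ∀ t : ℝ, ‖κ₁⁻¹ • deriv (deriv (deriv γ)) t + κ₁ • deriv γ t‖ =
      |q| * Real.sqrt (∑ α : Fin s, Real.cos (θ α) ^ 2) := by
  intro t
  set C := ∑ α : Fin s, Real.cos (θ α) ^ 2 with hC
  have hq2 : (0:ℝ) < q ^ 2 := by positivity
  have h1C : (0:ℝ) < 1 - C := by linarith
  have hκpos : 0 < κ₁ := by
    rw [hκ₁]; exact mul_pos (abs_pos.mpr hq) (Real.sqrt_pos.mpr h1C)
  have hκne : κ₁ ≠ 0 := hκpos.ne'
  have hκsq : κ₁ ^ 2 = q ^ 2 * (1 - C) := by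
    rw [hκ₁, mul_pow, sq_abs, Real.sq_sqrt h1C.le]
  set u := deriv γ t with hu
  -- the third derivative
  have h1 : deriv (deriv γ) = fun r => (-q) • (phiCLM n s) (deriv γ r) := by
    funext r; rw [hmag r]; rfl
  have h0 : HasDerivAt (fun r => (-q) • (phiCLM n s) (deriv γ r))
      ((-q) • (phiCLM n s) (deriv (deriv γ) t)) t :=
    ((phiCLM n s).hasFDerivAt.comp_hasDerivAt t (hγ' t).hasDerivAt).const_smul (-q)
  have key3 : deriv (deriv (deriv γ)) t = (q ^ 2) • phi n s (phi n s u) := by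
    rw [h1, h0.deriv, hmag t, map_smul, smul_smul, phiCLM_apply]
    congr 1
    ring
  -- components of the vector W
  set W : EuclideanSpace ℝ (Fin (2*n+s)) :=
    κ₁⁻¹ • deriv (deriv (deriv γ)) t + κ₁ • u with hW
  set a : ℝ := κ₁ - q ^ 2 * κ₁⁻¹ with ha
  have hWlt : ∀ k : Fin (2*n+s), (k : ℕ) < 2*n → W k = a * u k := by
    intro k hk
    simp only [hW, key3, PiLp.add_apply, PiLp.smul_apply, smul_eq_mul,
      phi_sq_lt n s u k hk, ha]
    ring
  have hWA : ∀ α : Fin s, W (idxA n s α) = κ₁ * Real.cos (θ α) := by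
    intro α
    have hge : 2*n ≤ ((idxA n s α : Fin (2*n+s)) : ℕ) := by simp [idxA]
    simp only [hW, key3, PiLp.add_apply, PiLp.smul_apply, smul_eq_mul,
      phi_sq_ge n s u _ hge]
    rw [hu, hslant t α]
    ring
  -- the squared norm of u
  have hsum1 : ∑ k : Fin (2*n+s), u k ^ 2 = 1 := by
    have h2 : ‖u‖ ^ 2 = 1 := by rw [hunit t]; norm_num
    rw [EuclideanSpace.norm_eq, Real.sq_sqrt (by positivity)] at h2
    simpa [Real.norm_eq_abs, sq_abs] using h2
  have hnat : ∀ α : Fin s, Fin.natAdd (2*n) α = idxA n s α := fun α => rfl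
  have hsumA : ∑ α : Fin s, u (Fin.natAdd (2*n) α) ^ 2 = C := by
    rw [hC]
    refine Finset.sum_congr rfl fun α _ => ?_
    rw [hnat α, hu, hslant t α]
  rw [Fin.sum_univ_add] at hsum1
  rw [hsumA] at hsum1
  have hsumcast : ∑ i : Fin (2*n), u (Fin.castAdd s i) ^ 2 = 1 - C := by linarith
  -- compute the norm
  rw [EuclideanSpace.norm_eq]
  simp only [Real.norm_eq_abs, sq_abs]
  rw [Fin.sum_univ_add]
  have e1 : ∑ i : Fin (2*n), W (Fin.castAdd s i) ^ 2 = a ^ 2 * (1 - C) := by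
    rw [← hsumcast, Finset.mul_sum]
    refine Finset.sum_congr rfl fun i _ => ?_
    rw [hWlt _ (by simp)]
    ring
  have e2 : ∑ α : Fin s, W (Fin.natAdd (2*n) α) ^ 2 = κ₁ ^ 2 * C := by
    rw [hC, Finset.mul_sum]
    refine Finset.sum_congr rfl fun α _ => ?_
    rw [hnat α, hWA α]
    ring
  rw [e1, e2]
  have hval : a ^ 2 * (1 - C) + κ₁ ^ 2 * C = q ^ 2 * C := by
    rw [ha]
    field_simp
    nlinarith [hκsq, sq_nonneg κ₁, sq_nonneg q]
  rw [hval, Real.sqrt_mul (sq_nonneg q), Real.sqrt_sq_eq_abs]
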